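/- For each g in {4, 8, 16, 32}, the ratio N_p(g)/N_p(2) of the number of gaps equal to g in the cycle of gaps 𝒢(p#) to the number of gaps equal to 2 in 𝒢(p#) converges to 1 as p → ∞ through the primes. -/

import Mathlib

open Finset

/-- `b` is the next totative of `P` after `a`: `a < b`, `b` is coprime to `P`,
and no integer strictly between `a` and `b` is coprime to `P`. -/
def IsNextTot (P a b : ℕ) : Prop :=
  a < b ∧ Nat.Coprime b P ∧ ∀ x, a < x → x < b → ¬ Nat.Coprime x P

/-- Starting at `r`, the successive totatives of `P` after `r` occur at the
successive partial sums of the list of gaps `c`. -/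
def MatchesGaps (P : ℕ) : ℕ → List ℕ → Prop
  | _, [] => True
  | r, c :: cs => IsNextTot P r (r + c) ∧ MatchesGaps P (r + c) cs

open scoped Classical in
/-- `Ncount p s` : the number of (cyclic) occurrences of the constellation `s`
in the cycle of gaps `𝒢(p#)`.  Since the pattern of coprimality to `p#` is
periodic with period `p#`, this is the number of totatives `r ∈ [1, p#]` of `p#`
at which the gap pattern `s` begins. -/
noncomputable def Ncount (p : ℕ) (s : List ℕ) : ℕ :=
  ((Finset.Icc 1 (primorial p)).filter
    (fun r => Nat.Coprime r (primorial p) ∧ MatchesGaps (primorial p) r s)).card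

open scoped Classical in
/-- `nCount p g j` : the number of (cyclic) occurrences in `𝒢(p#)` of
constellations of length `j` with sum `g` (the driving terms of length `j`
for the gap `g`). -/
noncomputable def nCount (p g j : ℕ) : ℕ :=
  ((Finset.Icc 1 (primorial p)).filter
    (fun r => Nat.Coprime r (primorial p) ∧
      ∃ c : List ℕ, c.length = j ∧ c.sum = g ∧ MatchesGaps (primorial p) r c)).card

lemma isUnit_prod_iff {M N : Type*} [Monoid M] [Monoid N] {u : M × N} :
    IsUnit u ↔ IsUnit u.1 ∧ IsUnit u.2 := by
  constructor
  · intro h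
    exact ⟨h.map (MonoidHom.fst M N), h.map (MonoidHom.snd M N)⟩
  · rintro ⟨⟨a, ha⟩, ⟨b, hb⟩⟩
    exact ⟨⟨(a.val, b.val), (a.inv, b.inv), by ext <;> simp [a.val_inv, b.val_inv],
      by ext <;> simp [a.inv_val, b.inv_val]⟩, by ext <;> simp [ha, hb]⟩

open scoped Classical in
/-- number of `r ∈ [1,n]` with `r + t` coprime to `n` for all `t ∈ T`. -/
noncomputable def cnt (n : ℕ) (T : Finset ℕ) : ℕ :=
  ((Finset.Icc 1 n).filter fun r => ∀ t ∈ T, Nat.Coprime (r + t) n).card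

open scoped Classical in
noncomputable def nu (q : ℕ) (T : Finset ℕ) : ℕ :=
  (T.image fun t : ℕ => (-(t : ZMod q))).card

lemma cnt_eq_zmod (n : ℕ) (hn : n ≠ 0) (T : Finset ℕ) :
    haveI : NeZero n := ⟨hn⟩
    cnt n T = (Finset.univ.filter fun x : ZMod n => ∀ t ∈ T, IsUnit (x + (t : ZMod n))).card := by
  classical
  haveI : NeZero n := ⟨hn⟩
  rw [cnt]
  apply Finset.card_bij (fun (r : ℕ) (_ : r ∈ (Finset.Icc 1 n).filter fun r => ∀ t ∈ T, Nat.Coprime (r + t) n) => ((r : ZMod n)))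
  · intro r hr
    rw [mem_filter] at hr
    rw [mem_filter]
    refine ⟨mem_univ _, fun t ht => ?_⟩
    have := hr.2 t ht
    rw [← ZMod.isUnit_iff_coprime] at this
    rwa [Nat.cast_add] at this
  · intro a ha b hb hab
    rw [mem_filter, Finset.mem_Icc] at ha hb
    rw [ZMod.natCast_eq_natCast_iff] at hab
    have ha' := ha.1; have hb' := hb.1
    have : a % n = b % n := hab
    rcases eq_or_lt_of_le ha'.2 with h1 | h1 <;> rcases eq_or_lt_of_le hb'.2 with h2 | h2
    · omega
    · rw [h1, Nat.mod_self, Nat.mod_eq_of_lt h2] at this; omega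
    · rw [h2, Nat.mod_self, Nat.mod_eq_of_lt h1] at this; omega
    · rwa [Nat.mod_eq_of_lt h1, Nat.mod_eq_of_lt h2] at this
  · intro x hx
    rw [mem_filter] at hx
    refine ⟨if x = 0 then n else x.val, ?_, ?_⟩
    · rw [mem_filter, Finset.mem_Icc]
      constructor
      · split_ifs with h
        · exact ⟨Nat.one_le_iff_ne_zero.mpr hn, le_rfl⟩
        · refine ⟨Nat.one_le_iff_ne_zero.mpr ?_, (ZMod.val_lt x).le⟩
          intro h0
          exact h (by rwa [← ZMod.val_eq_zero])
      · intro t ht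
        have hu := hx.2 t ht
        rw [← ZMod.isUnit_iff_coprime, Nat.cast_add]
        have : ((if x = 0 then n else x.val : ℕ) : ZMod n) = x := by
          split_ifs with h
          · rw [ZMod.natCast_self, h]
          · exact ZMod.natCast_rightInverse x
        rwa [this]
    · split_ifs with h
      · rw [ZMod.natCast_self, h]
      · exact ZMod.natCast_rightInverse x

lemma cnt_prime {q : ℕ} (hq : q.Prime) (T : Finset ℕ) : cnt q T = q - nu q T := by
  classical
  haveI : NeZero q := ⟨hq.pos.ne'⟩
  haveI : Fact q.Prime := ⟨hq⟩
  rw [cnt_eq_zmod q hq.pos.ne', nu]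
  have h1 : (Finset.univ.filter fun x : ZMod q => ∀ t ∈ T, IsUnit (x + (t : ZMod q)))
      = Finset.univ \ (T.image (fun t : ℕ => (-(t : ZMod q)))) := by
    ext x
    rw [mem_filter, mem_sdiff, mem_image]
    simp only [mem_univ, true_and]
    constructor
    · rintro h ⟨t, ht, hxt⟩
      have := h t ht
      rw [isUnit_iff_ne_zero] at this
      apply this
      rw [← hxt]; ring
    · intro h t ht
      rw [isUnit_iff_ne_zero]
      intro hx
      exact h ⟨t, ht, by linear_combination -hx⟩
  rw [h1, card_sdiff_of_subset (subset_univ _), card_univ, ZMod.card]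

lemma cnt_mul {m n : ℕ} (hm : m ≠ 0) (hn : n ≠ 0) (h : m.Coprime n) (T : Finset ℕ) :
    cnt (m * n) T = cnt m T * cnt n T := by
  classical
  haveI : NeZero m := ⟨hm⟩
  haveI : NeZero n := ⟨hn⟩
  haveI : NeZero (m * n) := ⟨mul_ne_zero hm hn⟩
  let e := ZMod.chineseRemainder h
  have key : ∀ x : ZMod (m * n),
      (∀ t ∈ T, IsUnit (x + (t : ZMod (m*n)))) ↔
      ((∀ t ∈ T, IsUnit ((e x).1 + (t : ZMod m))) ∧ ∀ t ∈ T, IsUnit ((e x).2 + (t : ZMod n))) := by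
    intro x
    constructor
    · intro hu
      constructor <;> intro t ht
      · have h1 := (hu t ht).map e.toRingHom
        rw [map_add, map_natCast] at h1
        exact h1.map (RingHom.fst (ZMod m) (ZMod n))
      · have h1 := (hu t ht).map e.toRingHom
        rw [map_add, map_natCast] at h1
        exact h1.map (RingHom.snd (ZMod m) (ZMod n))
    · rintro ⟨h1, h2⟩ t ht
      have hu : IsUnit (e (x + (t : ZMod (m*n)))) := by
        rw [map_add, map_natCast, isUnit_prod_iff]
        exact ⟨h1 t ht, h2 t ht⟩
      have := hu.map e.symm.toRingHom
      rwa [show e.symm.toRingHom (e (x + (t : ZMod (m*n)))) = x + (t : ZMod (m*n)) from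
        e.symm_apply_apply _] at this
  rw [cnt_eq_zmod _ (mul_ne_zero hm hn), cnt_eq_zmod _ hm, cnt_eq_zmod _ hn]
  have hc : (Finset.univ.filter fun x : ZMod (m*n) => ∀ t ∈ T, IsUnit (x + (t : ZMod (m*n)))).card
      = ((Finset.univ.filter fun y : ZMod m => ∀ t ∈ T, IsUnit (y + (t : ZMod m))) ×ˢ
         (Finset.univ.filter fun z : ZMod n => ∀ t ∈ T, IsUnit (z + (t : ZMod n)))).card := by
    apply Finset.card_bij (fun x _ => e x)
    · intro x hx
      rw [mem_filter] at hx
      rw [Finset.mem_product, mem_filter, mem_filter]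
      exact ⟨⟨mem_univ _, ((key x).mp hx.2).1⟩, ⟨mem_univ _, ((key x).mp hx.2).2⟩⟩
    · intro a _ b _ hab
      exact e.injective hab
    · intro y hy
      refine ⟨e.symm y, ?_, e.apply_symm_apply y⟩
      rw [Finset.mem_product, mem_filter, mem_filter] at hy
      rw [mem_filter]
      refine ⟨mem_univ _, (key _).mpr ?_⟩
      rw [e.apply_symm_apply]
      exact ⟨hy.1.2, hy.2.2⟩
  rw [hc, Finset.card_product]

lemma cnt_prod (S : Finset ℕ) (hS : ∀ q ∈ S, q.Prime) (T : Finset ℕ) :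
    cnt (∏ q ∈ S, q) T = ∏ q ∈ S, (q - nu q T) := by
  classical
  induction S using Finset.cons_induction with
  | empty =>
      simp only [Finset.prod_empty]
      rw [cnt]
      have : (Finset.Icc 1 1).filter (fun r => ∀ t ∈ T, Nat.Coprime (r + t) 1)
          = Finset.Icc 1 1 := by
        apply Finset.filter_true_of_mem
        intro r _ t _
        exact Nat.coprime_one_right _
      rw [this]
      simp
  | cons q S hq ih =>
      have hq' : q.Prime := hS q (Finset.mem_cons_self _ _)
      have hS' : ∀ r ∈ S, r.Prime := fun r hr => hS r (Finset.mem_cons.mpr (Or.inr hr))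
      have hprod : (∏ r ∈ S, r) ≠ 0 := Finset.prod_ne_zero_iff.mpr fun r hr => (hS' r hr).pos.ne'
      have hcop : q.Coprime (∏ r ∈ S, r) := by
        apply Nat.Coprime.prod_right
        intro r hr
        exact (Nat.coprime_primes hq' (hS' r hr)).mpr (by rintro rfl; exact hq hr)
      rw [Finset.prod_cons, Finset.prod_cons, cnt_mul hq'.pos.ne' hprod hcop, ih hS',
        cnt_prime hq']

lemma nu_two {T : Finset ℕ} (hne : T.Nonempty) (hev : ∀ t ∈ T, Even t) : nu 2 T = 1 := by
  classical
  rw [nu]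
  have : (T.image fun t : ℕ => (-(t : ZMod 2))) = {0} := by
    have h0 : ∀ t ∈ T, (-(t : ZMod 2)) = 0 := by
      intro t ht
      have : (t : ZMod 2) = 0 := by
        have h2 : t % 2 = 0 := Nat.even_iff.mp (hev t ht)
        rw [← ZMod.natCast_mod, h2, Nat.cast_zero]
      rw [this, neg_zero]
    rw [Finset.image_congr (g := fun _ => (0 : ZMod 2)) (fun t ht => h0 t ht)]
    exact Finset.image_const hne 0
  rw [this, Finset.card_singleton]

lemma neg_natCast_inj {q : ℕ} [NeZero q] {a b : ℕ} (ha : a < q) (hb : b < q)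
    (h : (-(a : ZMod q)) = (-(b : ZMod q))) : a = b := by
  have h' : (a : ZMod q) = (b : ZMod q) := by linear_combination -h
  have := congrArg ZMod.val h'
  rwa [ZMod.val_cast_of_lt ha, ZMod.val_cast_of_lt hb] at this

lemma nu_pair {q g : ℕ} (hq : q.Prime) (hqg : ¬ q ∣ g) : nu q {0, g} = 2 := by
  classical
  haveI : NeZero q := ⟨hq.pos.ne'⟩
  rw [nu, Finset.image_insert, Finset.image_singleton, Nat.cast_zero, neg_zero]
  apply Finset.card_pair
  intro h
  apply hqg
  rw [← ZMod.natCast_eq_zero_iff]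
  linear_combination h

lemma nu_triple {q t g : ℕ} (hq : q.Prime) (h0t : 0 < t) (htg : t < g) (hgq : g < q) :
    nu q {0, t, g} = 3 := by
  classical
  haveI : NeZero q := ⟨hq.pos.ne'⟩
  rw [nu, Finset.image_insert, Finset.image_insert, Finset.image_singleton, Nat.cast_zero,
    neg_zero]
  have htq : t < q := htg.trans hgq
  have h0q : 0 < q := hq.pos
  rw [Finset.card_insert_of_notMem, Finset.card_insert_of_notMem, Finset.card_singleton]
  · intro h
    rw [Finset.mem_singleton] at h
    exact absurd (neg_natCast_inj htq hgq h) htg.ne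
  · intro h
    rw [Finset.mem_insert, Finset.mem_singleton] at h
    have h00 : -((0:ℕ) : ZMod q) = (0 : ZMod q) := by simp
    rcases h with h | h
    · exact absurd (neg_natCast_inj h0q htq (h00.trans h)).symm h0t.ne'
    · exact absurd (neg_natCast_inj h0q hgq (h00.trans h)).symm (h0t.trans htg).ne'

lemma two_dvd_primorial {p : ℕ} (hp : 2 ≤ p) : 2 ∣ primorial p := by
  rw [primorial]
  exact Finset.dvd_prod_of_mem _ (by
    simp only [Finset.mem_filter, Finset.mem_range]
    exact ⟨by omega, Nat.prime_two⟩)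

lemma Ncount_two {p : ℕ} (hp : 2 ≤ p) : Ncount p [2] = cnt (primorial p) {0, 2} := by
  classical
  have h2 : 2 ∣ primorial p := two_dvd_primorial hp
  rw [Ncount, cnt]
  congr 1
  apply Finset.filter_congr
  intro r _
  constructor
  · rintro ⟨hr, hnext, -⟩
    intro t ht
    rcases Finset.mem_insert.mp ht with rfl | ht
    · simpa using hr
    · rw [Finset.mem_singleton] at ht
      subst ht
      exact hnext.2.1
  · intro h
    have hr : Nat.Coprime r (primorial p) := by simpa using h 0 (by simp)
    have hr2 : Nat.Coprime (r + 2) (primorial p) := h 2 (by simp)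
    refine ⟨hr, ⟨by omega, hr2, ?_⟩, trivial⟩
    intro x hx1 hx2 hcop
    have hxr : x = r + 1 := by omega
    have hrodd : ¬ 2 ∣ r :=
      (Nat.prime_two.coprime_iff_not_dvd).mp (Nat.Coprime.coprime_dvd_right h2 hr).symm
    have hxodd : ¬ 2 ∣ x :=
      (Nat.prime_two.coprime_iff_not_dvd).mp (Nat.Coprime.coprime_dvd_right h2 hcop).symm
    omega

lemma Ncount_le_cnt {p g : ℕ} (hg : 0 < g) : Ncount p [g] ≤ cnt (primorial p) {0, g} := by
  classical
  rw [Ncount, cnt]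
  apply Finset.card_le_card
  intro r hr
  rw [Finset.mem_filter] at hr ⊢
  refine ⟨hr.1, ?_⟩
  obtain ⟨hcop, hnext, -⟩ := hr.2
  intro t ht
  rcases Finset.mem_insert.mp ht with rfl | ht
  · simpa using hcop
  · rw [Finset.mem_singleton] at ht
    subst ht
    exact hnext.2.1

lemma cnt_le_Ncount {p g : ℕ} (hg : 0 < g) :
    cnt (primorial p) {0, g} ≤ Ncount p [g] + ∑ t ∈ Finset.Ioo 0 g, cnt (primorial p) {0, t, g} := by
  classical
  set P := primorial p
  have hsub : ((Finset.Icc 1 P).filter fun r => ∀ t ∈ ({0, g} : Finset ℕ), Nat.Coprime (r + t) P)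
      ⊆ ((Finset.Icc 1 P).filter
            (fun r => Nat.Coprime r P ∧ MatchesGaps P r [g]))
        ∪ (Finset.Ioo 0 g).biUnion (fun t =>
            (Finset.Icc 1 P).filter fun r => ∀ s ∈ ({0, t, g} : Finset ℕ), Nat.Coprime (r + s) P) := by
    intro r hr
    rw [Finset.mem_filter] at hr
    have hcop : Nat.Coprime r P := by simpa using hr.2 0 (by simp)
    have hcg : Nat.Coprime (r + g) P := hr.2 g (by simp)
    rw [Finset.mem_union]
    by_cases hnext : ∀ x, r < x → x < r + g → ¬ Nat.Coprime x P
    · left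
      rw [Finset.mem_filter]
      exact ⟨hr.1, hcop, ⟨by omega, hcg, hnext⟩, trivial⟩
    · right
      push_neg at hnext
      obtain ⟨x, hx1, hx2, hxc⟩ := hnext
      rw [Finset.mem_biUnion]
      refine ⟨x - r, by rw [Finset.mem_Ioo]; omega, ?_⟩
      rw [Finset.mem_filter]
      refine ⟨hr.1, ?_⟩
      intro s hs
      rcases Finset.mem_insert.mp hs with rfl | hs
      · simpa using hcop
      rcases Finset.mem_insert.mp hs with rfl | hs
      · have : r + (x - r) = x := by omega
        rw [this]; exact hxc
      · rw [Finset.mem_singleton] at hs; subst hs; exact hcg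
  calc cnt P {0, g} ≤ _ := Finset.card_le_card hsub
    _ ≤ _ := Finset.card_union_le _ _
    _ ≤ _ := by
        rw [Ncount]
        gcongr
        exact Finset.card_biUnion_le

lemma cnt_primorial (p : ℕ) (T : Finset ℕ) :
    cnt (primorial p) T = ∏ q ∈ (p + 1).primesBelow, (q - nu q T) := by
  have : primorial p = ∏ q ∈ (p + 1).primesBelow, q := by
    rw [primorial, Nat.primesBelow]
  rw [this, cnt_prod _ (fun q hq => Nat.prime_of_mem_primesBelow hq)]

lemma factor_pair_eq {q g : ℕ} (hq : q.Prime) (hg0 : g ≠ 0) (hgE : Even g) (hg32 : g ∣ 32) :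
    q - nu q {0, g} = q - nu q {0, 2} := by
  have hevg : ∀ t ∈ ({0, g} : Finset ℕ), Even t := by
    intro t ht
    rcases Finset.mem_insert.mp ht with rfl | ht
    · exact Even.zero
    · rw [Finset.mem_singleton] at ht; subst ht; exact hgE
  have hev2 : ∀ t ∈ ({0, 2} : Finset ℕ), Even t := by
    intro t ht
    rcases Finset.mem_insert.mp ht with rfl | ht
    · exact Even.zero
    · rw [Finset.mem_singleton] at ht; subst ht; exact even_two
  by_cases h2 : q = 2
  · subst h2
    rw [nu_two ⟨0, by simp⟩ hevg, nu_two ⟨0, by simp⟩ hev2]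
  · have hq2 : ¬ q ∣ 2 := fun h => h2 ((Nat.prime_dvd_prime_iff_eq hq Nat.prime_two).mp h)
    have hqg : ¬ q ∣ g := by
      intro h
      have h32 : q ∣ 32 := h.trans hg32
      have : q ∣ 2 ^ 5 := by norm_num at h32 ⊢; exact h32
      exact hq2 (hq.dvd_of_dvd_pow this)
    rw [nu_pair hq hqg, nu_pair hq hq2]

lemma cnt_pair_eq {p g : ℕ} (hg0 : g ≠ 0) (hgE : Even g) (hg32 : g ∣ 32) :
    cnt (primorial p) {0, g} = cnt (primorial p) {0, 2} := by
  rw [cnt_primorial, cnt_primorial]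
  exact Finset.prod_congr rfl fun q hq =>
    factor_pair_eq (Nat.prime_of_mem_primesBelow hq) hg0 hgE hg32

lemma factor_two_pos {q : ℕ} (hq : q.Prime) : 0 < q - nu q {0, 2} := by
  have hev2 : ∀ t ∈ ({0, 2} : Finset ℕ), Even t := by
    intro t ht
    rcases Finset.mem_insert.mp ht with rfl | ht
    · exact Even.zero
    · rw [Finset.mem_singleton] at ht; subst ht; exact even_two
  by_cases h2 : q = 2
  · subst h2
    rw [nu_two ⟨0, by simp⟩ hev2]
    norm_num
  · have hq2 : ¬ q ∣ 2 := fun h => h2 ((Nat.prime_dvd_prime_iff_eq hq Nat.prime_two).mp h)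
    rw [nu_pair hq hq2]
    have : 3 ≤ q := by
      rcases hq.two_le.lt_or_eq with h | h
      · omega
      · omega
    omega

lemma cnt_two_pos (p : ℕ) : 0 < cnt (primorial p) {0, 2} := by
  rw [cnt_primorial]
  exact Finset.prod_pos fun q hq => factor_two_pos (Nat.prime_of_mem_primesBelow hq)

lemma tendsto_sum_primesBelow_one_div :
    Filter.Tendsto (fun n : ℕ => ∑ q ∈ n.primesBelow, (1 : ℝ) / q) Filter.atTop Filter.atTop := by
  have h0 : ∀ n : ℕ, 0 ≤ Set.indicator {p : ℕ | p.Prime} (fun n : ℕ => (1 : ℝ) / n) n := by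
    intro n
    apply Set.indicator_nonneg
    intro i _
    positivity
  have h1 := (not_summable_iff_tendsto_nat_atTop_of_nonneg h0).mp not_summable_one_div_on_primes
  have h2 : ∀ n : ℕ, ∑ q ∈ n.primesBelow, (1 : ℝ) / q
      = ∑ i ∈ Finset.range n, Set.indicator {p : ℕ | p.Prime} (fun n : ℕ => (1 : ℝ) / n) i := by
    intro n
    rw [Nat.primesBelow, Finset.sum_filter]
    apply Finset.sum_congr rfl
    intro i _
    rw [Set.indicator_apply]
    simp only [Set.mem_setOf_eq]
  simpa only [← h2] using h1

lemma cnt_triple_ratio_tendsto_zero {t g : ℕ} (h0t : 0 < t) (htg : t < g) (hg32 : g ≤ 32) :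
    Filter.Tendsto (fun p : ℕ =>
        (cnt (primorial p) {0, t, g} : ℝ) / (cnt (primorial p) {0, 2} : ℝ))
      Filter.atTop (nhds 0) := by
  classical
  set C : ℝ := 32 ^ 33 * Real.exp 33 with hC
  have hbound : ∀ p : ℕ,
      (cnt (primorial p) {0, t, g} : ℝ) / (cnt (primorial p) {0, 2} : ℝ)
        ≤ C * Real.exp (-(∑ q ∈ (p+1).primesBelow, (1:ℝ)/q)) := by
    intro p
    set S := (p+1).primesBelow with hS
    have hprime : ∀ q ∈ S, q.Prime := fun q hq => Nat.prime_of_mem_primesBelow hq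
    have hbpos : ∀ q ∈ S, (0:ℝ) < ((q - nu q {0,2} : ℕ) : ℝ) := by
      intro q hq
      exact_mod_cast factor_two_pos (hprime q hq)
    rw [cnt_primorial, cnt_primorial]
    rw [Nat.cast_prod, Nat.cast_prod, ← Finset.prod_div_distrib]
    have hfac : ∀ q ∈ S, ((q - nu q {0,t,g} : ℕ) : ℝ) / ((q - nu q {0,2} : ℕ) : ℝ)
        ≤ if q ≤ 32 then (32:ℝ) else Real.exp (-(1/q)) := by
      intro q hq
      have hqp := hprime q hq
      by_cases h32 : q ≤ 32
      · rw [if_pos h32]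
        have h1le : (1:ℝ) ≤ ((q - nu q {0,2} : ℕ) : ℝ) := by
          have := factor_two_pos hqp
          exact_mod_cast this
        have : ((q - nu q {0,t,g} : ℕ) : ℝ) ≤ 32 := by
          have h1 : (q - nu q {0,t,g} : ℕ) ≤ q := Nat.sub_le _ _
          have : (q - nu q {0,t,g} : ℕ) ≤ 32 := le_trans h1 h32
          exact_mod_cast this
        calc ((q - nu q {0,t,g} : ℕ) : ℝ) / ((q - nu q {0,2} : ℕ) : ℝ)
            ≤ ((q - nu q {0,t,g} : ℕ) : ℝ) := div_le_self (by positivity) h1le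
          _ ≤ 32 := this
      · rw [if_neg h32]
        push_neg at h32
        have hq2 : ¬ q ∣ 2 := by
          intro h
          have := Nat.le_of_dvd (by norm_num) h
          omega
        rw [nu_pair hqp hq2, nu_triple hqp h0t htg (by omega)]
        have h3q : 3 ≤ q := by omega
        have hc3 : ((q - 3 : ℕ) : ℝ) = (q : ℝ) - 3 := by
          rw [Nat.cast_sub h3q]; norm_num
        have hc2 : ((q - 2 : ℕ) : ℝ) = (q : ℝ) - 2 := by
          rw [Nat.cast_sub (by omega)]; norm_num
        rw [hc3, hc2]
        have hq2' : (0:ℝ) < (q:ℝ) - 2 := by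
          have : (33:ℝ) ≤ (q:ℝ) := by exact_mod_cast (by omega : 33 ≤ q)
          linarith
        have heq : ((q:ℝ) - 3) / ((q:ℝ) - 2) = 1 - 1/((q:ℝ) - 2) := by
          field_simp
          ring
        rw [heq]
        have e1 : 1 - 1/((q:ℝ) - 2) ≤ Real.exp (-(1/((q:ℝ) - 2))) := by
          have := Real.add_one_le_exp (-(1/((q:ℝ) - 2)))
          linarith
        have e2 : Real.exp (-(1/((q:ℝ) - 2))) ≤ Real.exp (-(1/(q:ℝ))) := by
          apply Real.exp_le_exp.mpr
          have hqpos : (0:ℝ) < (q:ℝ) := by positivity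
          have : 1/(q:ℝ) ≤ 1/((q:ℝ) - 2) := by
            apply one_div_le_one_div_of_le hq2'
            linarith
          linarith
        exact e1.trans e2
    have hnn : ∀ q ∈ S, (0:ℝ) ≤ ((q - nu q {0,t,g} : ℕ) : ℝ) / ((q - nu q {0,2} : ℕ) : ℝ) := by
      intro q hq
      positivity
    calc (∏ q ∈ S, ((q - nu q {0,t,g} : ℕ) : ℝ) / ((q - nu q {0,2} : ℕ) : ℝ))
        ≤ ∏ q ∈ S, (if q ≤ 32 then (32:ℝ) else Real.exp (-(1/q))) :=
          Finset.prod_le_prod hnn hfac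
      _ ≤ C * Real.exp (-(∑ q ∈ S, (1:ℝ)/q)) := by
          rw [← Finset.prod_filter_mul_prod_filter_not S (fun q => q ≤ 32)]
          have hsmall : (∏ q ∈ S.filter (fun q => q ≤ 32), (if q ≤ 32 then (32:ℝ) else Real.exp (-(1/q))))
              ≤ 32 ^ 33 := by
            rw [Finset.prod_congr rfl (fun q hq => if_pos (Finset.mem_filter.mp hq).2)]
            rw [Finset.prod_const]
            apply pow_le_pow_right₀ (by norm_num)
            calc (S.filter (fun q => q ≤ 32)).card ≤ (Finset.range 33).card := by
                  apply Finset.card_le_card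
                  intro q hq
                  rw [Finset.mem_range]
                  have := (Finset.mem_filter.mp hq).2
                  omega
              _ = 33 := Finset.card_range 33
          have hlarge : (∏ q ∈ S.filter (fun q => ¬ q ≤ 32), (if q ≤ 32 then (32:ℝ) else Real.exp (-(1/q))))
              ≤ Real.exp 33 * Real.exp (-(∑ q ∈ S, (1:ℝ)/q)) := by
            rw [Finset.prod_congr rfl (fun q hq => if_neg (Finset.mem_filter.mp hq).2)]
            rw [← Real.exp_sum, ← Real.exp_add]
            apply Real.exp_le_exp.mpr
            have hsplit : ∑ q ∈ S, (1:ℝ)/q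
                = ∑ q ∈ S.filter (fun q => q ≤ 32), (1:ℝ)/q
                  + ∑ q ∈ S.filter (fun q => ¬ q ≤ 32), (1:ℝ)/q :=
              (Finset.sum_filter_add_sum_filter_not S _ _).symm
            have hsmallsum : ∑ q ∈ S.filter (fun q => q ≤ 32), (1:ℝ)/q ≤ 33 := by
              calc ∑ q ∈ S.filter (fun q => q ≤ 32), (1:ℝ)/q
                  ≤ ∑ _q ∈ S.filter (fun q => q ≤ 32), (1:ℝ) := by
                    apply Finset.sum_le_sum
                    intro q hq
                    have hqp := hprime q (Finset.mem_filter.mp hq).1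
                    have : (1:ℝ) ≤ (q:ℝ) := by exact_mod_cast hqp.one_lt.le
                    rw [div_le_one (by linarith)]
                    exact this
                _ = (S.filter (fun q => q ≤ 32)).card := by rw [Finset.sum_const]; ring
                _ ≤ 33 := by
                    have : (S.filter (fun q => q ≤ 32)).card ≤ 33 := by
                      calc (S.filter (fun q => q ≤ 32)).card ≤ (Finset.range 33).card := by
                            apply Finset.card_le_card
                            intro q hq
                            rw [Finset.mem_range]
                            have := (Finset.mem_filter.mp hq).2
                            omega
                        _ = 33 := Finset.card_range 33
                    exact_mod_cast this
            have hneg : ∑ q ∈ S.filter (fun q => ¬ q ≤ 32), -((1:ℝ)/q)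
                = -(∑ q ∈ S.filter (fun q => ¬ q ≤ 32), (1:ℝ)/q) :=
              Finset.sum_neg_distrib _
            rw [hneg]
            linarith
          calc (∏ q ∈ S.filter (fun q => q ≤ 32), (if q ≤ 32 then (32:ℝ) else Real.exp (-(1/q))))
                * (∏ q ∈ S.filter (fun q => ¬ q ≤ 32), (if q ≤ 32 then (32:ℝ) else Real.exp (-(1/q))))
              ≤ 32 ^ 33 * (Real.exp 33 * Real.exp (-(∑ q ∈ S, (1:ℝ)/q))) := by
                apply mul_le_mul hsmall hlarge (Finset.prod_nonneg ?_) (by positivity)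
                intro q hq
                split_ifs
                · norm_num
                · positivity
            _ = C * Real.exp (-(∑ q ∈ S, (1:ℝ)/q)) := by rw [hC]; ring
  have hnn : ∀ p : ℕ, 0 ≤ (cnt (primorial p) {0, t, g} : ℝ) / (cnt (primorial p) {0, 2} : ℝ) := by
    intro p; positivity
  apply squeeze_zero hnn hbound
  have hL : Filter.Tendsto (fun p : ℕ => ∑ q ∈ (p+1).primesBelow, (1:ℝ)/q)
      Filter.atTop Filter.atTop :=
    tendsto_sum_primesBelow_one_div.comp (Filter.tendsto_add_atTop_nat 1)
  have := (Real.tendsto_exp_neg_atTop_nhds_zero.comp hL).const_mul C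
  simpa using this

lemma main_limit {g : ℕ} (hg0 : g ≠ 0) (hgE : Even g) (hgd : g ∣ 32) (hg32 : g ≤ 32) :
    Filter.Tendsto (fun p : ℕ => (Ncount p [g] : ℝ) / (Ncount p [2] : ℝ))
      Filter.atTop (nhds 1) := by
  classical
  set E : ℕ → ℝ := fun p => ∑ t ∈ Finset.Ioo 0 g,
    (cnt (primorial p) {0, t, g} : ℝ) / (cnt (primorial p) {0, 2} : ℝ) with hE
  have hEtendsto : Filter.Tendsto E Filter.atTop (nhds 0) := by
    have := tendsto_finset_sum (Finset.Ioo 0 g) (fun t ht =>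
      cnt_triple_ratio_tendsto_zero (Finset.mem_Ioo.mp ht).1 (Finset.mem_Ioo.mp ht).2 hg32)
    simpa using this
  have hgpos : 0 < g := Nat.pos_of_ne_zero hg0
  have hup : ∀ᶠ p : ℕ in Filter.atTop, (Ncount p [g] : ℝ) / (Ncount p [2] : ℝ) ≤ 1 := by
    filter_upwards [Filter.eventually_ge_atTop 2] with p hp
    rw [Ncount_two hp]
    apply div_le_one_of_le₀
    · have h1 : Ncount p [g] ≤ cnt (primorial p) {0, 2} := by
        rw [← cnt_pair_eq hg0 hgE hgd]
        exact Ncount_le_cnt hgpos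
      exact_mod_cast h1
    · positivity
  have hlow : ∀ᶠ p : ℕ in Filter.atTop,
      1 - E p ≤ (Ncount p [g] : ℝ) / (Ncount p [2] : ℝ) := by
    filter_upwards [Filter.eventually_ge_atTop 2] with p hp
    rw [Ncount_two hp]
    have hA : (0:ℝ) < (cnt (primorial p) {0, 2} : ℝ) := by exact_mod_cast cnt_two_pos p
    set A : ℝ := (cnt (primorial p) {0, 2} : ℝ)
    set SS : ℝ := ∑ t ∈ Finset.Ioo 0 g, (cnt (primorial p) {0, t, g} : ℝ) with hSS
    have hle : A ≤ (Ncount p [g] : ℝ) + SS := by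
      have := cnt_le_Ncount (p := p) hgpos
      rw [cnt_pair_eq hg0 hgE hgd] at this
      have := (Nat.cast_le (α := ℝ)).mpr this
      push_cast at this
      rw [hSS]
      convert this using 2
    have hEp : E p = SS / A := by
      rw [hE, hSS, Finset.sum_div]
    rw [hEp]
    have h2 : (A - SS)/A ≤ (Ncount p [g] : ℝ)/A := (div_le_div_iff_of_pos_right hA).mpr (by linarith)
    have h3 : (A - SS)/A = 1 - SS/A := by rw [sub_div, div_self hA.ne']
    linarith
  have hlowlim : Filter.Tendsto (fun p => 1 - E p) Filter.atTop (nhds 1) := by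
    have := Filter.Tendsto.sub (tendsto_const_nhds (x := (1:ℝ))) hEtendsto
    simpa using this
  exact tendsto_of_tendsto_of_tendsto_of_le_of_le' hlowlim tendsto_const_nhds hlow hup

theorem ratio_tendsto_one : ∀ g ∈ ({4, 8, 16, 32} : Finset ℕ),
    Filter.Tendsto (fun p : ℕ => (Ncount p [g] : ℝ) / (Ncount p [2] : ℝ))
      (Filter.atTop ⊓ Filter.principal {p : ℕ | p.Prime}) (nhds 1) := by
  intro g hg
  refine Filter.Tendsto.mono_left ?_ inf_le_left
  fin_cases hg <;>
  exact main_limit (by norm_num) (by decide) (by norm_num) (by norm_num)
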